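/- Let (S_β)_{β ∈ ℕ} satisfy Assumption A, let u_{β_k} : [0,T] → ℝ^N be continuous functions (indexed by a strictly increasing sequence β_1 < β_2 < …) converging uniformly on [0,T] to a function v that is threshold simple. Then for every t ∈ [0,T] and every i = 1,…,N, Σ_{j=1}^N ω_{ij} ∫_0^t S_{β_k}(u_{β_k,j}(s) - u_θ) ds converges, as k → ∞, to Σ_{j=1}^N ω_{ij} ∫_0^t H(v_j(s) - u_θ) ds, where H is the Heaviside function. -/
import Mathlib


open Set Finset Filter MeasureTheory

/-- The Heaviside function with `H 0 = 1/2`. -/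
noncomputable def Heaviside (x : ℝ) : ℝ :=
  if x < 0 then 0 else if x = 0 then 1/2 else 1

lemma key_tendsto (S : ℕ → ℝ → ℝ)
    (hA : ∀ ε > (0:ℝ), ∀ δ > (0:ℝ), ∃ Q : ℕ, ∀ b > Q,
      (∀ x < -δ, |S b x| < ε) ∧ (∀ x > δ, |1 - S b x| < ε))
    (β : ℕ → ℕ) (hβ : StrictMono β) (x : ℕ → ℝ) (L : ℝ) (hL : L ≠ 0)
    (hx : Tendsto x atTop (nhds L)) :
    Tendsto (fun k => S (β k) (x k)) atTop (nhds (Heaviside L)) := by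
  have hβt : Tendsto β atTop atTop := hβ.tendsto_atTop
  rcases hL.lt_or_gt with hneg | hpos
  · have hH : Heaviside L = 0 := by simp [Heaviside, hneg]
    rw [hH, Metric.tendsto_nhds]
    intro ε hε
    obtain ⟨Q, hQ⟩ := hA ε hε (-L/2) (by linarith)
    have h1 : ∀ᶠ k in atTop, x k < L/2 := hx.eventually (eventually_lt_nhds (by linarith))
    have h2 : ∀ᶠ k in atTop, β k > Q := hβt.eventually_gt_atTop Q
    filter_upwards [h1, h2] with k hk1 hk2
    rw [Real.dist_eq, sub_zero]
    exact (hQ _ hk2).1 _ (by linarith)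
  · have hH : Heaviside L = 1 := by
      simp [Heaviside, not_lt.mpr hpos.le, hpos.ne']
    rw [hH, Metric.tendsto_nhds]
    intro ε hε
    obtain ⟨Q, hQ⟩ := hA ε hε (L/2) (by linarith)
    have h1 : ∀ᶠ k in atTop, x k > L/2 := hx.eventually (eventually_gt_nhds (by linarith))
    have h2 : ∀ᶠ k in atTop, β k > Q := hβt.eventually_gt_atTop Q
    filter_upwards [h1, h2] with k hk1 hk2
    rw [Real.dist_eq, abs_sub_comm]
    exact (hQ _ hk2).2 _ hk1

theorem stmt_5
    (N : ℕ) [NeZero N] (T : ℝ) (hT : 0 < T)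
    (ω : Fin N → Fin N → ℝ) (uθ : ℝ)
    (S : ℕ → ℝ → ℝ)
    (hLip : ∀ β, ∃ K : NNReal, LipschitzWith K (S β))
    (hbd : ∀ β x, S β x ∈ Set.Icc (0:ℝ) 1)
    (hA : ∀ ε > (0:ℝ), ∀ δ > (0:ℝ), ∃ Q : ℕ, ∀ β > Q,
      (∀ x < -δ, |S β x| < ε) ∧ (∀ x > δ, |1 - S β x| < ε))
    (β : ℕ → ℕ) (hβ : StrictMono β)
    (u : ℕ → ℝ → Fin N → ℝ) (hu : ∀ k, ContinuousOn (u k) (Set.Icc 0 T))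
    (v : ℝ → Fin N → ℝ)
    (hconv : TendstoUniformlyOn u v Filter.atTop (Set.Icc 0 T))
    (hts : volume {s : ℝ | s ∈ Set.Icc 0 T ∧
      (Finset.univ.inf' Finset.univ_nonempty fun j => |v s j - uθ|) = 0} = 0) :
    ∀ t ∈ Set.Icc (0:ℝ) T, ∀ i,
      Filter.Tendsto
        (fun k => ∑ j, ω i j * ∫ s in (0:ℝ)..t, S (β k) (u k s j - uθ))
        Filter.atTop
        (nhds (∑ j, ω i j * ∫ s in (0:ℝ)..t, Heaviside (v s j - uθ))) := by
  intro t ht i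
  have hsub : Set.uIoc (0:ℝ) t ⊆ Set.Icc 0 T := by
    rw [Set.uIoc_of_le ht.1]
    exact fun s hs => ⟨hs.1.le, hs.2.trans ht.2⟩
  apply tendsto_finset_sum
  intro j _
  apply Filter.Tendsto.const_mul
  apply intervalIntegral.tendsto_integral_filter_of_dominated_convergence
    (bound := fun _ => (1:ℝ))
  · filter_upwards with k
    have hc : ContinuousOn (fun s => S (β k) (u k s j - uθ)) (Set.Icc 0 T) := by
      exact (hLip (β k)).choose_spec.continuous.comp_continuousOn
        (((continuous_apply j).comp_continuousOn (hu k)).sub continuousOn_const)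
    exact (hc.aestronglyMeasurable measurableSet_Icc).mono_measure
      (Measure.restrict_mono hsub le_rfl)
  · filter_upwards with k
    refine Eventually.of_forall fun s => ?_
    have h := hbd (β k) (u k s j - uθ)
    rw [Real.norm_eq_abs, abs_le]
    exact fun _ => ⟨by linarith [h.1], h.2⟩
  · exact intervalIntegrable_const
  · have hZ : ∀ᵐ s ∂volume, s ∉ {s : ℝ | s ∈ Set.Icc 0 T ∧
        (Finset.univ.inf' Finset.univ_nonempty fun j => |v s j - uθ|) = 0} :=
      measure_eq_zero_iff_ae_notMem.mp hts
    filter_upwards [hZ] with s hsZ hs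
    have hsIcc : s ∈ Set.Icc 0 T := hsub hs
    have hne : v s j - uθ ≠ 0 := by
      intro h
      apply hsZ
      refine ⟨hsIcc, le_antisymm ?_ ?_⟩
      · calc _ ≤ |v s j - uθ| := Finset.inf'_le _ (Finset.mem_univ j)
          _ = 0 := by rw [h, abs_zero]
      · exact Finset.le_inf' _ _ fun j' _ => abs_nonneg _
    have hx : Tendsto (fun k => u k s j - uθ) atTop (nhds (v s j - uθ)) := by
      have := hconv.tendsto_at hsIcc
      exact (tendsto_pi_nhds.mp this j).sub_const uθ
    exact key_tendsto S hA β hβ _ _ hne hx
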